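/- Let D ≥ 1, σ > 0, η ∈ ℝ, let S ∈ ℝ^{D×D} be symmetric, and let u ∈ ℝ^D be a unit vector with S u = λ u for some λ ∈ ℝ. Set Ω* = (1/σ²)((u uᵀ)/(σ² + 1) − I) and let (E_t)_{t≥0} satisfy E_0 = −Ω* and E_t = E_{t−1} − 2η S E_{t−1} (u uᵀ + σ² I) for all t ≥ 1. Then for every t ≥ 0, E_t = −[ I − 2η (λ u uᵀ + σ² S) ]^t Ω*. -/

import Mathlib

open Matrix

/-- Closed-form solution of the expected-error dynamics of linear DSM when the data direction
`u` is a unit eigenvector of the symmetric conditioning matrix `S`: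
`E_t = −[I − 2η(λ u uᵀ + σ² S)]^t Ω*`. -/
theorem stmt5 (D : ℕ) (hD : 1 ≤ D) (σ η : ℝ) (hσ : 0 < σ)
    (S : Matrix (Fin D) (Fin D) ℝ) (hS : S.IsSymm)
    (u : Fin D → ℝ) (hu : ∑ i, u i ^ 2 = 1)
    (lam : ℝ) (hEig : S *ᵥ u = lam • u)
    (Ωstar : Matrix (Fin D) (Fin D) ℝ)
    (hΩstar : Ωstar = (σ ^ 2)⁻¹ • ((σ ^ 2 + 1)⁻¹ • vecMulVec u u - (1 : Matrix (Fin D) (Fin D) ℝ)))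
    (E : ℕ → Matrix (Fin D) (Fin D) ℝ)
    (hE0 : E 0 = -Ωstar)
    (hrec : ∀ t : ℕ, 1 ≤ t →
      E t = E (t - 1) - (2 * η) • (S *
        (E (t - 1) * (vecMulVec u u + σ ^ 2 • (1 : Matrix (Fin D) (Fin D) ℝ))))) :
    ∀ t : ℕ,
      E t = -(((1 : Matrix (Fin D) (Fin D) ℝ) -
        (2 * η) • (lam • vecMulVec u u + σ ^ 2 • S)) ^ t * Ωstar) := by
  set P : Matrix (Fin D) (Fin D) ℝ := vecMulVec u u with hP
  -- basic multiplication facts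
  have hSP : S * P = lam • P := by
    ext i j
    simp only [mul_apply, vecMulVec_apply, Matrix.smul_apply, smul_eq_mul, hP]
    have : ∑ k, S i k * (u k * u j) = (∑ k, S i k * u k) * u j := by
      rw [Finset.sum_mul]; exact Finset.sum_congr rfl (fun k _ => by ring)
    rw [this]
    have h1 : (S *ᵥ u) i = lam * u i := by rw [hEig]; rfl
    have h2 : (S *ᵥ u) i = ∑ k, S i k * u k := rfl
    rw [← h2, h1]; ring
  have hPS : P * S = lam • P := by
    ext i j
    simp only [mul_apply, vecMulVec_apply, Matrix.smul_apply, smul_eq_mul, hP]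
    have : ∑ k, u i * u k * S k j = u i * ∑ k, S j k * u k := by
      rw [Finset.mul_sum]
      refine Finset.sum_congr rfl (fun k _ => ?_)
      have := congrFun (congrFun hS.eq j) k
      simp only [transpose_apply] at this
      rw [← this]; ring
    rw [this]
    have h1 : (S *ᵥ u) j = lam * u j := by rw [hEig]; rfl
    have h2 : (S *ᵥ u) j = ∑ k, S j k * u k := rfl
    rw [← h2, h1]; ring
  have hPP : P * P = P := by
    ext i j
    simp only [mul_apply, vecMulVec_apply, hP]
    have : ∑ k, u i * u k * (u k * u j) = (u i * u j) * ∑ k, u k ^ 2 := by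
      rw [Finset.mul_sum]; exact Finset.sum_congr rfl (fun k _ => by ring)
    rw [this, hu, mul_one]
  -- commutation
  have cSP : Commute S P := by unfold Commute SemiconjBy; rw [hSP, hPS]
  set A : Matrix (Fin D) (Fin D) ℝ := lam • P + σ ^ 2 • S with hA
  set M : Matrix (Fin D) (Fin D) ℝ := 1 - (2 * η) • A with hM
  have cPA : Commute P A := ((Commute.refl P).smul_right lam).add_right (cSP.symm.smul_right _)
  have cSA : Commute S A := (cSP.smul_right lam).add_right ((Commute.refl S).smul_right _)
  have cPM : Commute P M := (Commute.one_right P).sub_right (cPA.smul_right _)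
  have cSM : Commute S M := (Commute.one_right S).sub_right (cSA.smul_right _)
  have cΩP : Commute Ωstar P := by
    rw [hΩstar]
    exact ((((Commute.refl P).smul_left _).sub_left (Commute.one_left P)).smul_left _)
  have cΩS : Commute Ωstar S := by
    rw [hΩstar]
    exact (((cSP.symm.smul_left _).sub_left (Commute.one_left S)).smul_left _)
  have cΩM : Commute Ωstar M :=
    (Commute.one_right Ωstar).sub_right (((cΩP.smul_right lam).add_right (cΩS.smul_right _)).smul_right _)
  intro t
  induction t with
  | zero => simpa using hE0
  | succ t ih =>
    have hrec' := hrec (t + 1) (Nat.le_add_left 1 t)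
    simp only [Nat.add_sub_cancel] at hrec'
    rw [hrec', ih]
    have hSPA : S * (P + σ ^ 2 • 1) = A := by
      rw [Matrix.mul_add, hSP, hA]
      congr 1
      rw [Matrix.mul_smul, Matrix.mul_one]
    have cSMt : Commute S (M ^ t) := cSM.pow_right t
    have cΩA : Commute Ωstar (P + σ ^ 2 • 1) :=
      cΩP.add_right ((Commute.one_right Ωstar).smul_right _)
    have hkey : S * (-(M ^ t * Ωstar) * (P + σ ^ 2 • 1)) = -(M ^ t * (A * Ωstar)) := by
      calc S * (-(M ^ t * Ωstar) * (P + σ ^ 2 • 1))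
          = -(S * M ^ t * (Ωstar * (P + σ ^ 2 • 1))) := by
            rw [Matrix.neg_mul, Matrix.mul_neg, mul_assoc, mul_assoc]
        _ = -(M ^ t * S * ((P + σ ^ 2 • 1) * Ωstar)) := by rw [cSMt.eq, cΩA.eq]
        _ = -(M ^ t * (S * (P + σ ^ 2 • 1)) * Ωstar) := by
            rw [mul_assoc, mul_assoc, mul_assoc]
        _ = -(M ^ t * (A * Ωstar)) := by rw [hSPA, mul_assoc]
    rw [hkey]
    have : M ^ (t + 1) * Ωstar = M ^ t * Ωstar - (2 * η) • (M ^ t * (A * Ωstar)) := by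
      rw [pow_succ, mul_assoc, hM, Matrix.sub_mul, Matrix.one_mul, Matrix.smul_mul,
        Matrix.mul_sub, Matrix.mul_smul]
    rw [this]
    simp only [smul_neg, sub_neg_eq_add, neg_sub]
    abel
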